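/- Kleinman policy-improvement preserves stability: Let A be a real q×q matrix, B a real q×m matrix, Q a real symmetric positive definite q×q matrix, and R a real symmetric positive definite m×m matrix. Suppose K is a real m×q matrix such that A − BK is Hurwitz, and let P be a real symmetric matrix solving the Lyapunov equation (A − BK)ᵀ P + P (A − BK) + Q + Kᵀ R K = 0. Then the updated gain K' = R⁻¹ Bᵀ P makes A − BK' Hurwitz. -/

import Mathlib

open Matrix

/-- Symmetric part of a real square matrix: `(A + Aᵀ)/2`. -/
noncomputable def symPart {n : ℕ} (A : Matrix (Fin n) (Fin n) ℝ) : Matrix (Fin n) (Fin n) ℝ :=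
  (1 / 2 : ℝ) • (A + Aᵀ)

theorem symPart_isHermitian {n : ℕ} (A : Matrix (Fin n) (Fin n) ℝ) :
    (symPart A).IsHermitian := by
  ext i j
  simp [symPart, Matrix.IsHermitian, Matrix.conjTranspose_apply, mul_comm, add_comm]
  ring

/-- Logarithmic 2-norm of a real square matrix: the largest eigenvalue of its
symmetric part `(A + Aᵀ)/2`. -/
noncomputable def mu2 {n : ℕ} (A : Matrix (Fin n) (Fin n) ℝ) : ℝ :=
  ⨆ i, (symPart_isHermitian A).eigenvalues i

/-- Spectral norm of a real matrix: the operator norm induced by the Euclidean norm. -/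
noncomputable def specNorm {m n : ℕ} (A : Matrix (Fin m) (Fin n) ℝ) : ℝ :=
  ‖LinearMap.toContinuousLinearMap (Matrix.toEuclideanLin A)‖

/-- A real square matrix is Hurwitz if every complex eigenvalue (i.e. every element of the
complex spectrum of its complexification) has strictly negative real part. -/
def IsHurwitz {n : ℕ} (A : Matrix (Fin n) (Fin n) ℝ) : Prop :=
  ∀ μ ∈ spectrum ℂ (A.map (Complex.ofReal ·)), μ.re < 0

/-! ### Auxiliary machinery for the Kleinman update theorem -/

open Filter Topology
open scoped ComplexOrder

attribute [local instance] Matrix.linftyOpNormedRing Matrix.linftyOpNormedAlgebra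

section KleinmanAux

variable {n : ℕ}

/-- Complexification of a real matrix. -/
noncomputable def mapC (M : Matrix (Fin n) (Fin n) ℝ) : Matrix (Fin n) (Fin n) ℂ :=
  M.map (Complex.ofReal ·)

lemma mapC_eq (M : Matrix (Fin n) (Fin n) ℝ) :
    mapC M = Complex.ofRealHom.mapMatrix M := rfl

lemma mapC_mul (M N : Matrix (Fin n) (Fin n) ℝ) : mapC (M * N) = mapC M * mapC N := by
  simp [mapC_eq, _root_.map_mul]

lemma mapC_add (M N : Matrix (Fin n) (Fin n) ℝ) : mapC (M + N) = mapC M + mapC N := by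
  simp [mapC_eq, map_add]

lemma mapC_sub (M N : Matrix (Fin n) (Fin n) ℝ) : mapC (M - N) = mapC M - mapC N := by
  simp [mapC_eq, map_sub]

lemma mapC_neg (M : Matrix (Fin n) (Fin n) ℝ) : mapC (-M) = -mapC M := by
  simp [mapC_eq, map_neg]

lemma mapC_one : mapC (1 : Matrix (Fin n) (Fin n) ℝ) = 1 := by
  simp [mapC_eq, _root_.map_one]

lemma mapC_det (M : Matrix (Fin n) (Fin n) ℝ) : (mapC M).det = ((M.det : ℝ) : ℂ) := by
  rw [mapC_eq, ← RingHom.map_det]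
  rfl

lemma mapC_inv (G : Matrix (Fin n) (Fin n) ℝ) (hG : IsUnit G.det) :
    mapC G⁻¹ = (mapC G)⁻¹ := by
  symm
  apply Matrix.inv_eq_left_inv
  rw [← mapC_mul, Matrix.nonsing_inv_mul G hG, mapC_one]

lemma mapC_conjTranspose (M : Matrix (Fin n) (Fin n) ℝ) :
    (mapC M)ᴴ = mapC Mᵀ := by
  ext i j
  simp [mapC, Matrix.conjTranspose_apply, Complex.conj_ofReal]

lemma mapC_isHermitian {M : Matrix (Fin n) (Fin n) ℝ} (h : M.IsHermitian) :
    (mapC M).IsHermitian := by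
  have h' : Mᵀ = M := h
  rw [Matrix.IsHermitian, mapC_conjTranspose, h']

lemma re_quadform (M : Matrix (Fin n) (Fin n) ℝ) (x : Fin n → ℂ) :
    (star x ⬝ᵥ (mapC M) *ᵥ x).re =
      (fun i => (x i).re) ⬝ᵥ M *ᵥ (fun i => (x i).re)
      + (fun i => (x i).im) ⬝ᵥ M *ᵥ (fun i => (x i).im) := by
  simp only [mapC, dotProduct, Matrix.mulVec, Pi.star_apply, Matrix.map_apply,
    Finset.mul_sum, Complex.re_sum]
  rw [← Finset.sum_add_distrib]
  refine Finset.sum_congr rfl fun i _ => ?_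
  rw [← Finset.sum_add_distrib]
  refine Finset.sum_congr rfl fun j _ => ?_
  simp [Complex.mul_re, Complex.mul_im]

lemma quad_im_zero {M : Matrix (Fin n) (Fin n) ℂ} (hM : M.IsHermitian) (x : Fin n → ℂ) :
    (star x ⬝ᵥ M *ᵥ x).im = 0 := by
  have : star (star x ⬝ᵥ M *ᵥ x) = star x ⬝ᵥ M *ᵥ x := by
    conv_lhs => rw [Matrix.star_dotProduct, star_star, Matrix.star_mulVec,
      ← Matrix.dotProduct_mulVec, hM.eq]
  have him := congrArg Complex.im this
  simp only [Complex.star_def, Complex.conj_im] at him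
  linarith

lemma mapC_posDef {M : Matrix (Fin n) (Fin n) ℝ} (h : M.PosDef) :
    (mapC M).PosDef := by
  refine Matrix.PosDef.of_dotProduct_mulVec_pos (mapC_isHermitian h.1) fun x hx => ?_
  rw [Complex.lt_def]
  refine ⟨?_, by simpa using (quad_im_zero (mapC_isHermitian h.1) x).symm⟩
  simp only [Complex.zero_re, re_quadform]
  have hre : ∀ y : Fin n → ℝ, 0 ≤ y ⬝ᵥ M *ᵥ y := fun y => by
    simpa using h.posSemidef.dotProduct_mulVec_nonneg y
  have hre' : ∀ y : Fin n → ℝ, y ≠ 0 → 0 < y ⬝ᵥ M *ᵥ y := fun y hy => by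
    simpa using h.dotProduct_mulVec_pos hy
  by_cases ha : (fun i => (x i).re) = (0 : Fin n → ℝ)
  · have hb : (fun i => (x i).im) ≠ (0 : Fin n → ℝ) := by
      intro hb
      apply hx
      funext i
      have h1 := congrFun ha i
      have h2 := congrFun hb i
      simp only [Pi.zero_apply] at h1 h2
      exact Complex.ext h1 h2
    have := hre' _ hb
    have := hre (fun i => (x i).re)
    linarith
  · have := hre' _ ha
    have := hre (fun i => (x i).im)
    linarith

lemma eig_of_mem_spectrum {M : Matrix (Fin n) (Fin n) ℂ} {μ : ℂ}
    (h : μ ∈ spectrum ℂ M) : ∃ v, v ≠ 0 ∧ M *ᵥ v = μ • v := by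
  rw [spectrum.mem_iff] at h
  rw [Matrix.isUnit_iff_isUnit_det, isUnit_iff_ne_zero, not_not,
    ← Matrix.exists_mulVec_eq_zero_iff] at h
  obtain ⟨v, hv, hv2⟩ := h
  refine ⟨v, hv, ?_⟩
  have : (algebraMap ℂ (Matrix (Fin n) (Fin n) ℂ)) μ *ᵥ v = μ • v := by
    simp [Matrix.algebraMap_eq_diagonal, Matrix.mulVec_diagonal, funext_iff,
      Pi.algebraMap_apply, Algebra.algebraMap_self, mul_comm]
  rw [Matrix.sub_mulVec, sub_eq_zero] at hv2
  rw [← hv2, this]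

lemma mem_spectrum_of_eig {M : Matrix (Fin n) (Fin n) ℂ} {μ : ℂ} {v : Fin n → ℂ}
    (hv : v ≠ 0) (h : M *ᵥ v = μ • v) : μ ∈ spectrum ℂ M := by
  rw [spectrum.mem_iff, Matrix.isUnit_iff_isUnit_det, isUnit_iff_ne_zero, not_not,
    ← Matrix.exists_mulVec_eq_zero_iff]
  refine ⟨v, hv, ?_⟩
  rw [Matrix.sub_mulVec, sub_eq_zero, h]
  simp [Matrix.algebraMap_eq_diagonal, Matrix.mulVec_diagonal, funext_iff,
    Pi.algebraMap_apply, Algebra.algebraMap_self, mul_comm]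

lemma re_neg_of_lyap {A' P' S' : Matrix (Fin n) (Fin n) ℂ}
    (hP : P'.PosDef) (hS : S'.PosDef)
    (heq : A'ᴴ * P' + P' * A' = -S') : ∀ μ ∈ spectrum ℂ A', μ.re < 0 := by
  intro μ hμ
  obtain ⟨v, hv, hAv⟩ := eig_of_mem_spectrum hμ
  have key : star v ⬝ᵥ (A'ᴴ * P' + P' * A') *ᵥ v
      = (starRingEnd ℂ μ + μ) * (star v ⬝ᵥ P' *ᵥ v) := by
    rw [Matrix.add_mulVec, dotProduct_add]
    have t1 : star v ⬝ᵥ (A'ᴴ * P') *ᵥ v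
        = starRingEnd ℂ μ * (star v ⬝ᵥ P' *ᵥ v) := by
      rw [← Matrix.mulVec_mulVec, Matrix.dotProduct_mulVec (star v) A'ᴴ,
        ← Matrix.star_mulVec, hAv, star_smul, smul_dotProduct]
      simp [smul_eq_mul]
    have t2 : star v ⬝ᵥ (P' * A') *ᵥ v = μ * (star v ⬝ᵥ P' *ᵥ v) := by
      rw [← Matrix.mulVec_mulVec, hAv, Matrix.mulVec_smul, dotProduct_smul]
      simp [smul_eq_mul]
    rw [t1, t2]
    ring
  rw [heq] at key
  have hre := congrArg Complex.re key
  have hz : 0 < (star v ⬝ᵥ P' *ᵥ v).re := hP.re_dotProduct_pos hv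
  have hs : 0 < (star v ⬝ᵥ S' *ᵥ v).re := hS.re_dotProduct_pos hv
  have hlhs : (star v ⬝ᵥ (-S') *ᵥ v).re = -(star v ⬝ᵥ S' *ᵥ v).re := by
    rw [Matrix.neg_mulVec, dotProduct_neg, Complex.neg_re]
  rw [hlhs] at hre
  have hrhs : ((starRingEnd ℂ μ + μ) * (star v ⬝ᵥ P' *ᵥ v)).re
      = (2 * μ.re) * (star v ⬝ᵥ P' *ᵥ v).re := by
    have : starRingEnd ℂ μ + μ = ((2 * μ.re : ℝ) : ℂ) := by
      apply Complex.ext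
      · simp
        ring
      · simp
    rw [this, Complex.re_ofReal_mul]
  rw [hrhs] at hre
  nlinarith

lemma norm_pow_tendsto_zero {M : Matrix (Fin n) (Fin n) ℂ}
    (h : ∀ ν ∈ spectrum ℂ M, ‖ν‖ < 1) :
    Tendsto (fun N : ℕ => ‖M ^ N‖) atTop (𝓝 0) := by
  have hρ : spectralRadius ℂ M < 1 := by
    rcases Set.eq_empty_or_nonempty (spectrum ℂ M) with he | hne
    · rw [spectralRadius]
      simp [he]
    · exact spectrum.spectralRadius_lt_of_forall_lt_of_nonempty hne
        (fun z hz => by simpa [← NNReal.coe_lt_coe] using h z hz)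
  have T := spectrum.pow_nnnorm_pow_one_div_tendsto_nhds_spectralRadius M
  obtain ⟨c, hc1, hc2⟩ := exists_between hρ
  set r : NNReal := c.toNNReal with hr
  have hcne : c ≠ ⊤ := (hc2.trans (by simp)).ne
  have hcr : c = (r : ENNReal) := (ENNReal.coe_toNNReal hcne).symm
  have hr1 : (r : ℝ) < 1 := by
    have := hc2
    rw [hcr] at this
    exact_mod_cast this
  have hev : ∀ᶠ N : ℕ in atTop, ((‖M ^ N‖₊ : ENNReal) ^ (1 / (N : ℝ)) < c) :=
    T.eventually_lt_const hc1
  have hev2 : ∀ᶠ N : ℕ in atTop, ‖M ^ N‖ ≤ (r : ℝ) ^ N := by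
    filter_upwards [hev, eventually_ge_atTop 1] with N hN hN1
    have hNne : (N : ℝ) ≠ 0 := by positivity
    have : ((‖M ^ N‖₊ : ENNReal) ^ (1 / (N : ℝ))) ^ (N : ℝ) < c ^ (N : ℝ) := by
      apply ENNReal.rpow_lt_rpow hN (by positivity)
    rw [← ENNReal.rpow_mul, one_div_mul_cancel hNne, ENNReal.rpow_one, hcr,
      ← ENNReal.coe_rpow_of_nonneg _ (by positivity), ENNReal.coe_lt_coe] at this
    have := this.le
    rw [← NNReal.coe_le_coe] at this
    simpa [NNReal.coe_rpow, Real.rpow_natCast] using this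
  refine squeeze_zero' (Eventually.of_forall fun N => norm_nonneg _) hev2 ?_
  exact tendsto_pow_atTop_nhds_zero_of_lt_one (by positivity) hr1

lemma hurwitz_det_one_sub_ne {A₀ : Matrix (Fin n) (Fin n) ℝ} (hK : IsHurwitz A₀) :
    IsUnit (1 - A₀).det := by
  rw [isUnit_iff_ne_zero]
  intro hdet
  have h1 : (1 : ℂ) ∈ spectrum ℂ (A₀.map (Complex.ofReal ·)) := by
    rw [spectrum.mem_iff, Matrix.isUnit_iff_isUnit_det, isUnit_iff_ne_zero, not_not]
    have : (algebraMap ℂ (Matrix (Fin n) (Fin n) ℂ)) 1 - A₀.map (Complex.ofReal ·)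
        = mapC (1 - A₀) := by
      rw [mapC_sub, mapC_one, RingHom.map_one]
      rfl
    rw [this, mapC_det, hdet]
    simp
  have := hK 1 h1
  norm_num at this

lemma cayley_spectrum_lt_one {A₀ : Matrix (Fin n) (Fin n) ℝ} (hK : IsHurwitz A₀) :
    ∀ ν ∈ spectrum ℂ (mapC ((1 - A₀)⁻¹ * (1 + A₀))), ‖ν‖ < 1 := by
  intro ν hν
  have hdet := hurwitz_det_one_sub_ne hK
  have hdetC : IsUnit (mapC (1 - A₀)).det := by
    rw [mapC_det, isUnit_iff_ne_zero]
    simpa using isUnit_iff_ne_zero.mp hdet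
  obtain ⟨v, hv, hFv⟩ := eig_of_mem_spectrum hν
  rw [mapC_mul, mapC_inv _ hdet] at hFv
  have key : mapC (1 + A₀) *ᵥ v = ν • (mapC (1 - A₀) *ᵥ v) := by
    have h0 := congrArg (fun w => mapC (1 - A₀) *ᵥ w) hFv
    simp only [Matrix.mulVec_mulVec, Matrix.mulVec_smul, ← Matrix.mul_assoc,
      Matrix.mul_nonsing_inv _ hdetC, Matrix.one_mul] at h0
    exact h0
  set w := mapC A₀ *ᵥ v with hw
  have key2 : v + w = ν • v - ν • w := by
    have e1 : mapC (1 + A₀) *ᵥ v = v + w := by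
      rw [mapC_add, mapC_one, Matrix.add_mulVec, Matrix.one_mulVec]
    have e2 : mapC (1 - A₀) *ᵥ v = v - w := by
      rw [mapC_sub, mapC_one, Matrix.sub_mulVec, Matrix.one_mulVec]
    rw [e1, e2, smul_sub] at key
    exact key
  have key3 : (1 + ν) • w = (ν - 1) • v := by
    funext i
    have := congrFun key2 i
    simp only [Pi.add_apply, Pi.sub_apply, Pi.smul_apply, smul_eq_mul] at this ⊢
    linear_combination this
  by_cases hν1 : ν = -1
  · rw [hν1] at key3
    simp only [add_neg_cancel, zero_smul] at key3
    rcases smul_eq_zero.mp key3.symm with h | h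
    · norm_num at h
    · exact absurd h hv
  · have hν1' : (1 + ν) ≠ 0 := fun h => hν1 (by linear_combination h)
    set μ := (ν - 1) / (1 + ν) with hμ
    have hAv : mapC A₀ *ᵥ v = μ • v := by
      rw [← hw]
      funext i
      have := congrFun key3 i
      simp only [Pi.smul_apply, smul_eq_mul] at this ⊢
      rw [hμ]
      field_simp
      linear_combination this
    have hμmem := mem_spectrum_of_eig hv hAv
    have hμre : μ.re < 0 := hK μ hμmem
    have hμ1 : (1 : ℂ) - μ ≠ 0 := by
      intro h
      have : μ = 1 := by linear_combination -h
      rw [this] at hμre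
      norm_num at hμre
    have hνval : ν = (1 + μ) / (1 - μ) := by
      rw [hμ]
      field_simp
      ring
    rw [hνval, norm_div]
    rw [div_lt_one (norm_pos_iff.mpr hμ1)]
    have hsq : ‖(1:ℂ) + μ‖ ^ 2 < ‖(1:ℂ) - μ‖ ^ 2 := by
      rw [Complex.sq_norm, Complex.sq_norm]
      simp only [Complex.normSq_apply, Complex.add_re, Complex.add_im, Complex.sub_re,
        Complex.sub_im, Complex.one_re, Complex.one_im]
      nlinarith
    exact lt_of_pow_lt_pow_left₀ 2 (norm_nonneg _) hsq

lemma conj_quad (F M : Matrix (Fin n) (Fin n) ℂ) (w : Fin n → ℂ) :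
    star w ⬝ᵥ (Fᴴ * M * F) *ᵥ w = star (F *ᵥ w) ⬝ᵥ M *ᵥ (F *ᵥ w) := by
  rw [← Matrix.mulVec_mulVec, ← Matrix.mulVec_mulVec, Matrix.dotProduct_mulVec (star w) Fᴴ,
    ← Matrix.star_mulVec, Matrix.dotProduct_mulVec]

lemma posdef_of_stein {Pc Fc Sc : Matrix (Fin n) (Fin n) ℂ}
    (hP : Pc.IsHermitian) (hS : Sc.PosDef)
    (heq : Pc = Fcᴴ * Pc * Fc + Sc)
    (hnorm : Tendsto (fun N : ℕ => ‖Fc ^ N‖) atTop (𝓝 0)) : Pc.PosDef := by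
  refine Matrix.PosDef.of_dotProduct_mulVec_pos hP fun v hv => ?_
  rw [Complex.lt_def]
  refine ⟨?_, by simpa using (quad_im_zero hP v).symm⟩
  simp only [Complex.zero_re]
  have step : ∀ w : Fin n → ℂ, (star w ⬝ᵥ Pc *ᵥ w).re
      = (star (Fc *ᵥ w) ⬝ᵥ Pc *ᵥ (Fc *ᵥ w)).re + (star w ⬝ᵥ Sc *ᵥ w).re := by
    intro w
    conv_lhs => rw [heq]
    rw [Matrix.add_mulVec, dotProduct_add, Complex.add_re, conj_quad]
  set u : ℕ → ℝ := fun N => (star (Fc ^ N *ᵥ v) ⬝ᵥ Pc *ᵥ (Fc ^ N *ᵥ v)).re with hu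
  have hstep' : ∀ N, u N = u (N + 1) + (star (Fc ^ N *ᵥ v) ⬝ᵥ Sc *ᵥ (Fc ^ N *ᵥ v)).re := by
    intro N
    have := step (Fc ^ N *ᵥ v)
    rw [hu]
    simp only []
    rw [this, Matrix.mulVec_mulVec, ← pow_succ']
  have hanti : Antitone u := by
    apply antitone_nat_of_succ_le
    intro N
    rw [hstep' N]
    have h5 : (0:ℝ) ≤ (star (Fc ^ N *ᵥ v) ⬝ᵥ Sc *ᵥ (Fc ^ N *ᵥ v)).re := by
      simpa using hS.posSemidef.re_dotProduct_nonneg (Fc ^ N *ᵥ v)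
    linarith
  have hudef : Tendsto u atTop (𝓝 0) := by
    have dot_le : ∀ x y : Fin n → ℂ, ‖x ⬝ᵥ y‖ ≤ (n : ℝ) * (‖x‖ * ‖y‖) := by
      intro x y
      calc ‖x ⬝ᵥ y‖ ≤ ∑ i, ‖x i * y i‖ := norm_sum_le _ _
        _ ≤ ∑ _i : Fin n, ‖x‖ * ‖y‖ := by
            refine Finset.sum_le_sum fun i _ => ?_
            rw [norm_mul]
            exact mul_le_mul (norm_le_pi_norm x i) (norm_le_pi_norm y i)
              (norm_nonneg _) (norm_nonneg _)
        _ = (n : ℝ) * (‖x‖ * ‖y‖) := by simp [Finset.sum_const, mul_comm]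
    have hb : ∀ N, ‖u N‖ ≤ (n : ℝ) * ‖Pc‖ * (‖Fc ^ N‖ * ‖v‖) ^ 2 := by
      intro N
      have h1 : ‖Fc ^ N *ᵥ v‖ ≤ ‖Fc ^ N‖ * ‖v‖ := Matrix.linfty_opNorm_mulVec _ _
      have h2 : ‖Pc *ᵥ (Fc ^ N *ᵥ v)‖ ≤ ‖Pc‖ * ‖Fc ^ N *ᵥ v‖ := Matrix.linfty_opNorm_mulVec _ _
      have h3 : ‖u N‖ ≤ ‖star (Fc ^ N *ᵥ v) ⬝ᵥ Pc *ᵥ (Fc ^ N *ᵥ v)‖ := by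
        rw [hu]
        exact Complex.abs_re_le_norm _
      have h4 : ‖star (Fc ^ N *ᵥ v)‖ = ‖Fc ^ N *ᵥ v‖ := norm_star _
      calc ‖u N‖ ≤ ‖star (Fc ^ N *ᵥ v) ⬝ᵥ Pc *ᵥ (Fc ^ N *ᵥ v)‖ := h3
        _ ≤ (n:ℝ) * (‖star (Fc ^ N *ᵥ v)‖ * ‖Pc *ᵥ (Fc ^ N *ᵥ v)‖) := dot_le _ _
        _ ≤ (n:ℝ) * ((‖Fc ^ N‖ * ‖v‖) * (‖Pc‖ * (‖Fc ^ N‖ * ‖v‖))) := by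
              rw [h4]
              refine mul_le_mul_of_nonneg_left ?_ (by positivity)
              exact mul_le_mul h1
                (h2.trans (mul_le_mul_of_nonneg_left h1 (norm_nonneg Pc)))
                (norm_nonneg _) (by positivity)
        _ = (n:ℝ) * ‖Pc‖ * (‖Fc ^ N‖ * ‖v‖) ^ 2 := by ring
    have hg : Tendsto (fun N : ℕ => (n:ℝ) * ‖Pc‖ * (‖Fc ^ N‖ * ‖v‖) ^ 2) atTop (𝓝 0) := by
      have hg1 : Tendsto (fun N : ℕ => ‖Fc ^ N‖ * ‖v‖) atTop (𝓝 0) := by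
        simpa using hnorm.mul_const ‖v‖
      have hg2 : Tendsto (fun N : ℕ => (‖Fc ^ N‖ * ‖v‖) ^ 2) atTop (𝓝 0) := by
        simpa using hg1.pow 2
      simpa using hg2.const_mul ((n:ℝ) * ‖Pc‖)
    exact squeeze_zero_norm hb hg
  have hnonneg : ∀ N, 0 ≤ u N := fun N => hanti.le_of_tendsto hudef N
  have h0 : u 0 = u 1 + (star (Fc ^ 0 *ᵥ v) ⬝ᵥ Sc *ᵥ (Fc ^ 0 *ᵥ v)).re := hstep' 0
  have hSpos : 0 < (star (Fc ^ 0 *ᵥ v) ⬝ᵥ Sc *ᵥ (Fc ^ 0 *ᵥ v)).re := by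
    simp only [pow_zero, Matrix.one_mulVec]
    simpa using hS.re_dotProduct_pos hv
  have : 0 < u 0 := by
    have := hnonneg 1
    linarith
  simpa [hu, Matrix.one_mulVec] using this

lemma real_conjT {a b : ℕ} (M : Matrix (Fin a) (Fin b) ℝ) : Mᴴ = Mᵀ :=
  Matrix.conjTranspose_eq_transpose_of_trivial M

lemma posdef_conj {S X : Matrix (Fin n) (Fin n) ℝ} (hS : S.PosDef) (hX : IsUnit X.det) :
    (Xᵀ * S * X).PosDef := by
  refine Matrix.PosDef.of_dotProduct_mulVec_pos ?_ ?_
  · have := Matrix.isHermitian_conjTranspose_mul_mul X hS.1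
    rwa [real_conjT] at this
  · intro v hv
    have hXv : X *ᵥ v ≠ 0 := by
      intro h0
      apply hv
      have : X⁻¹ *ᵥ (X *ᵥ v) = v := by
        rw [Matrix.mulVec_mulVec, Matrix.nonsing_inv_mul _ hX, Matrix.one_mulVec]
      rw [h0, Matrix.mulVec_zero] at this
      exact this.symm
    have he : star v ⬝ᵥ (Xᵀ * S * X) *ᵥ v = star (X *ᵥ v) ⬝ᵥ S *ᵥ (X *ᵥ v) := by
      rw [← Matrix.mulVec_mulVec, ← Matrix.mulVec_mulVec, Matrix.dotProduct_mulVec (star v) Xᵀ,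
        show (star v) = v from star_trivial v, show star (X *ᵥ v) = X *ᵥ v from star_trivial _,
        Matrix.vecMul_transpose, Matrix.dotProduct_mulVec]
    rw [he]
    exact hS.dotProduct_mulVec_pos hXv

private lemma conj_identity (G F P : Matrix (Fin n) (Fin n) ℝ) :
    Gᵀ * (Fᵀ * P * F - P) * G = (F * G)ᵀ * P * (F * G) - Gᵀ * P * G := by
  rw [Matrix.transpose_mul]
  noncomm_ring

private lemma conj_cancel {G : Matrix (Fin n) (Fin n) ℝ}
    (hGr : G * G⁻¹ = 1) (hGtl : (Gᵀ)⁻¹ * Gᵀ = 1) (X : Matrix (Fin n) (Fin n) ℝ) :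
    (Gᵀ)⁻¹ * (Gᵀ * X * G) * G⁻¹ = X := by
  calc (Gᵀ)⁻¹ * (Gᵀ * X * G) * G⁻¹
      = ((Gᵀ)⁻¹ * Gᵀ) * X * (G * G⁻¹) := by noncomm_ring
    _ = X := by rw [hGtl, hGr, Matrix.one_mul, Matrix.mul_one]

lemma stein_of_lyap {A₀ P S : Matrix (Fin n) (Fin n) ℝ}
    (hdetG : IsUnit (1 - A₀).det)
    (hL : A₀ᵀ * P + P * A₀ = -S) :
    P = ((1 - A₀)⁻¹ * (1 + A₀))ᵀ * P * ((1 - A₀)⁻¹ * (1 + A₀))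
      + ((1 - A₀)ᵀ)⁻¹ * (S + S) * (1 - A₀)⁻¹ := by
  have hGl : (1 - A₀)⁻¹ * (1 - A₀) = 1 := Matrix.nonsing_inv_mul _ hdetG
  have hGr : (1 - A₀) * (1 - A₀)⁻¹ = 1 := Matrix.mul_nonsing_inv _ hdetG
  have hdetGt : IsUnit ((1 - A₀)ᵀ).det := by rwa [Matrix.det_transpose]
  have hGtl : ((1 - A₀)ᵀ)⁻¹ * (1 - A₀)ᵀ = 1 := Matrix.nonsing_inv_mul _ hdetGt
  have hFG : ((1 - A₀)⁻¹ * (1 + A₀)) * (1 - A₀) = 1 + A₀ := by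
    have hcomm : (1 + A₀) * (1 - A₀) = (1 - A₀) * (1 + A₀) := by noncomm_ring
    calc ((1 - A₀)⁻¹ * (1 + A₀)) * (1 - A₀)
        = (1 - A₀)⁻¹ * ((1 + A₀) * (1 - A₀)) := by rw [Matrix.mul_assoc]
      _ = (1 - A₀)⁻¹ * ((1 - A₀) * (1 + A₀)) := by rw [hcomm]
      _ = 1 + A₀ := by rw [← Matrix.mul_assoc, hGl, Matrix.one_mul]
  have hmid : (1 - A₀)ᵀ * (((1 - A₀)⁻¹ * (1 + A₀))ᵀ * P * ((1 - A₀)⁻¹ * (1 + A₀)) - P) * (1 - A₀)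
      = (A₀ᵀ * P + P * A₀) + (A₀ᵀ * P + P * A₀) := by
    rw [conj_identity, hFG]
    simp only [Matrix.transpose_add, Matrix.transpose_sub, Matrix.transpose_one]
    noncomm_ring
  have hmain : ((1 - A₀)⁻¹ * (1 + A₀))ᵀ * P * ((1 - A₀)⁻¹ * (1 + A₀)) - P
      = ((1 - A₀)ᵀ)⁻¹ * ((A₀ᵀ * P + P * A₀) + (A₀ᵀ * P + P * A₀)) * (1 - A₀)⁻¹ := by
    rw [← hmid, conj_cancel hGr hGtl]
  rw [hL] at hmain
  have h2 : ((1 - A₀)ᵀ)⁻¹ * (-S + -S) * (1 - A₀)⁻¹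
      = -(((1 - A₀)ᵀ)⁻¹ * (S + S) * (1 - A₀)⁻¹) := by noncomm_ring
  rw [h2, sub_eq_iff_eq_add] at hmain
  rw [hmain]
  noncomm_ring

end KleinmanAux

/-- Kleinman policy improvement preserves stability: if `A − BK` is Hurwitz and
the symmetric matrix `P` solves `(A − BK)ᵀP + P(A − BK) + Q + KᵀRK = 0` with `Q ≻ 0`, `R ≻ 0`,
then the updated gain `K' = R⁻¹BᵀP` makes `A − BK'` Hurwitz. -/
theorem kleinman_update_hurwitz {q m : ℕ}
    (A : Matrix (Fin q) (Fin q) ℝ) (B : Matrix (Fin q) (Fin m) ℝ)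
    (Q P : Matrix (Fin q) (Fin q) ℝ) (R : Matrix (Fin m) (Fin m) ℝ)
    (K : Matrix (Fin m) (Fin q) ℝ)
    (hQ : Q.PosDef) (hR : R.PosDef)
    (hK : IsHurwitz (A - B * K))
    (hPsym : P.IsHermitian)
    (hLyap : (A - B * K)ᵀ * P + P * (A - B * K) + Q + Kᵀ * R * K = 0) :
    IsHurwitz (A - B * (R⁻¹ * Bᵀ * P)) := by
  classical
  have hRt : Rᵀ = R := by rw [← real_conjT]; exact hR.1
  have hPt : Pᵀ = P := by rw [← real_conjT]; exact hPsym
  -- S := Q + KᵀRK is positive definite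
  have hS : (Q + Kᵀ * R * K).PosDef := by
    refine hQ.add_posSemidef ?_
    have := hR.posSemidef.conjTranspose_mul_mul_same K
    rwa [real_conjT] at this
  -- rearranged Lyapunov equation
  have hL : (A - B * K)ᵀ * P + P * (A - B * K) = -(Q + Kᵀ * R * K) := by
    apply eq_neg_of_add_eq_zero_left
    rw [← hLyap]
    noncomm_ring
  -- Cayley transform and positive definiteness of P
  have hdetG : IsUnit (1 - (A - B * K)).det := hurwitz_det_one_sub_ne hK
  have hdetGinv : IsUnit ((1 - (A - B * K))⁻¹).det := by
    exact Matrix.isUnit_nonsing_inv_det _ hdetG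
  have hstein := stein_of_lyap hdetG hL
  have hS' : (((1 - (A - B * K))ᵀ)⁻¹ * ((Q + Kᵀ * R * K) + (Q + Kᵀ * R * K))
      * (1 - (A - B * K))⁻¹).PosDef := by
    rw [← Matrix.transpose_nonsing_inv]
    exact posdef_conj (hS.add hS) hdetGinv
  have hPc : (mapC P).PosDef := by
    refine posdef_of_stein (Fc := mapC ((1 - (A - B * K))⁻¹ * (1 + (A - B * K))))
      (mapC_isHermitian hPsym) (mapC_posDef hS') ?_ ?_
    · have := congrArg mapC hstein
      rw [mapC_add, mapC_mul, mapC_mul, ← mapC_conjTranspose] at this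
      exact this
    · exact norm_pow_tendsto_zero (cayley_spectrum_lt_one hK)
  -- the updated-gain Lyapunov equation
  have hdetR : IsUnit R.det := isUnit_iff_ne_zero.mpr (ne_of_gt hR.det_pos)
  have h1 : R * (R⁻¹ * Bᵀ * P) = Bᵀ * P := by
    rw [← Matrix.mul_assoc, ← Matrix.mul_assoc, Matrix.mul_nonsing_inv _ hdetR,
      Matrix.one_mul]
  have h2 : (R⁻¹ * Bᵀ * P)ᵀ * R = P * B := by
    rw [Matrix.transpose_mul, Matrix.transpose_mul, Matrix.transpose_transpose, hPt,
      Matrix.transpose_nonsing_inv, hRt, Matrix.mul_assoc, Matrix.mul_assoc,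
      Matrix.nonsing_inv_mul _ hdetR, Matrix.mul_one]
  have key : (A - B * (R⁻¹ * Bᵀ * P))ᵀ * P + P * (A - B * (R⁻¹ * Bᵀ * P))
      + (Q + ((R⁻¹ * Bᵀ * P) - K)ᵀ * R * ((R⁻¹ * Bᵀ * P) - K)
          + (R⁻¹ * Bᵀ * P)ᵀ * R * (R⁻¹ * Bᵀ * P))
      = ((A - B * K)ᵀ * P + P * (A - B * K) + Q + Kᵀ * R * K)
      + (((R⁻¹ * Bᵀ * P) - K)ᵀ * (R * (R⁻¹ * Bᵀ * P) - Bᵀ * P)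
          + ((R⁻¹ * Bᵀ * P)ᵀ * R - P * B) * ((R⁻¹ * Bᵀ * P) - K)) := by
    simp only [Matrix.transpose_sub, Matrix.transpose_mul, Matrix.sub_mul, Matrix.mul_sub,
      Matrix.add_mul, Matrix.mul_add, Matrix.mul_assoc]
    abel
  have hfinal0 : (A - B * (R⁻¹ * Bᵀ * P))ᵀ * P + P * (A - B * (R⁻¹ * Bᵀ * P))
      + (Q + ((R⁻¹ * Bᵀ * P) - K)ᵀ * R * ((R⁻¹ * Bᵀ * P) - K)
          + (R⁻¹ * Bᵀ * P)ᵀ * R * (R⁻¹ * Bᵀ * P)) = 0 := by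
    rw [key, hLyap, h1, h2]
    simp
  have hreal : (A - B * (R⁻¹ * Bᵀ * P))ᵀ * P + P * (A - B * (R⁻¹ * Bᵀ * P))
      = -(Q + ((R⁻¹ * Bᵀ * P) - K)ᵀ * R * ((R⁻¹ * Bᵀ * P) - K)
          + (R⁻¹ * Bᵀ * P)ᵀ * R * (R⁻¹ * Bᵀ * P)) := by
    exact eq_neg_of_add_eq_zero_left hfinal0
  -- the new S is positive definite
  have hS2 : (Q + ((R⁻¹ * Bᵀ * P) - K)ᵀ * R * ((R⁻¹ * Bᵀ * P) - K)
      + (R⁻¹ * Bᵀ * P)ᵀ * R * (R⁻¹ * Bᵀ * P)).PosDef := by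
    refine Matrix.PosDef.add_posSemidef (Matrix.PosDef.add_posSemidef hQ ?_) ?_
    · have := hR.posSemidef.conjTranspose_mul_mul_same ((R⁻¹ * Bᵀ * P) - K)
      rwa [real_conjT] at this
    · have := hR.posSemidef.conjTranspose_mul_mul_same (R⁻¹ * Bᵀ * P)
      rwa [real_conjT] at this
  -- complexify and conclude
  have heq2 : (mapC (A - B * (R⁻¹ * Bᵀ * P)))ᴴ * mapC P + mapC P * mapC (A - B * (R⁻¹ * Bᵀ * P))
      = -(mapC (Q + ((R⁻¹ * Bᵀ * P) - K)ᵀ * R * ((R⁻¹ * Bᵀ * P) - K)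
          + (R⁻¹ * Bᵀ * P)ᵀ * R * (R⁻¹ * Bᵀ * P))) := by
    have := congrArg mapC hreal
    rw [mapC_add, mapC_mul, mapC_mul, mapC_neg, ← mapC_conjTranspose] at this
    exact this
  intro μ hμ
  exact re_neg_of_lyap hPc (mapC_posDef hS2) heq2 μ hμ
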